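/- arXiv:1010.2630 — 5 statements merged into one kernel-verified Lean document; each statement's English description precedes it below -/
import Mathlib

section
/- Let x be a point of the open unit ball 𝔹ⁿ with x ≠ 0, let x* = x/|x|² be its inversion in the unit sphere, and let r > 0. Then the hyperbolic ball B_ρ(x,r) coincides with the Apollonian ball B_{x,x*}^{|x|·tanh(r/2)}; that is, for every y ∈ 𝔹ⁿ one has ρ(x,y) < r if and only if |x − y| < |x|·tanh(r/2)·|x* − y|. -/
/-- Hyperbolic distance in the open unit ball of `ℝⁿ`:
`ρ(x,y) = 2 · arsinh(|x−y| / (√(1−|x|²)·√(1−|y|²)))`. -/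
noncomputable def hypDistBall {n : ℕ} (x y : EuclideanSpace ℝ (Fin n)) : ℝ :=
  2 * Real.arsinh (‖x - y‖ / (Real.sqrt (1 - ‖x‖ ^ 2) * Real.sqrt (1 - ‖y‖ ^ 2)))

/-- The hyperbolic ball `B_ρ(x,r)` coincides with the Apollonian ball
`B_{x,x*}^{|x|·tanh(r/2)}` with base points `x` and `x* = x/|x|²`. -/
theorem hyperbolic_ball_is_apollonian {n : ℕ} (x : EuclideanSpace ℝ (Fin n))
    (hx : ‖x‖ < 1) (hx0 : x ≠ 0) (r : ℝ) (hr : 0 < r)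
    (y : EuclideanSpace ℝ (Fin n)) (hy : ‖y‖ < 1) :
    hypDistBall x y < r ↔
      ‖x - y‖ < ‖x‖ * Real.tanh (r / 2) * ‖(‖x‖ ^ 2)⁻¹ • x - y‖ := by
  have hxp : (0:ℝ) < ‖x‖ := norm_pos_iff.mpr hx0
  have sq_iff : ∀ u v : ℝ, 0 ≤ u → 0 ≤ v → (u < v ↔ u^2 < v^2) :=
    fun u v hu hv => ⟨fun h => by nlinarith, fun h => by nlinarith⟩
  set a := 1 - ‖x‖^2 with ha'
  set b := 1 - ‖y‖^2 with hb'
  have ha : 0 < a := by nlinarith [norm_nonneg x]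
  have hb : 0 < b := by nlinarith [norm_nonneg y]
  set A := ‖x - y‖ with hA'
  have hA : 0 ≤ A := norm_nonneg _
  set s := Real.sinh (r/2) with hs'
  set c := Real.cosh (r/2) with hc'
  have hs : 0 < s := Real.sinh_pos_iff.mpr (by linarith)
  have hc : 0 < c := Real.cosh_pos _
  have hcs : c^2 - s^2 = 1 := Real.cosh_sq_sub_sinh_sq _
  set D := ‖(‖x‖^2)⁻¹ • x - y‖ with hD'
  have hDnn : 0 ≤ D := norm_nonneg _
  have hD2 : ‖x‖^2 * D^2 = A^2 + a*b := by
    have h1 : A^2 = ‖x‖^2 - 2*inner ℝ x y + ‖y‖^2 := by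
      rw [hA', @norm_sub_sq_real]
    have h4 : (inner ℝ ((‖x‖^2)⁻¹ • x) y : ℝ) = (‖x‖^2)⁻¹ * inner ℝ x y :=
      real_inner_smul_left _ _ _
    have h3 : ‖(‖x‖^2)⁻¹ • x‖^2 = (‖x‖^2)⁻¹ := by
      rw [norm_smul, mul_pow, Real.norm_eq_abs,
        abs_of_pos (by positivity : (0:ℝ) < (‖x‖^2)⁻¹)]
      field_simp
    have h2 : D^2 = (‖x‖^2)⁻¹ - 2*((‖x‖^2)⁻¹ * inner ℝ x y) + ‖y‖^2 := by
      rw [hD', @norm_sub_sq_real, h3, h4]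
    have hx2 : (‖x‖:ℝ)^2 ≠ 0 := by positivity
    rw [h2, h1, ha', hb']
    field_simp
    ring
  -- LHS iff
  have main1 : hypDistBall x y < r ↔ A^2 < s^2 * (a*b) := by
    unfold hypDistBall
    rw [← hA', ← ha', ← hb']
    have hsp : 0 < Real.sqrt a * Real.sqrt b := by positivity
    constructor
    · intro h
      have h1 : Real.arsinh (A / (Real.sqrt a * Real.sqrt b)) < r/2 := by linarith
      have h2 : A / (Real.sqrt a * Real.sqrt b) < s := by
        rw [← Real.sinh_arsinh (A / (Real.sqrt a * Real.sqrt b)), hs']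
        exact Real.sinh_lt_sinh.mpr h1
      have h3 : A < s * (Real.sqrt a * Real.sqrt b) := (div_lt_iff₀ hsp).mp h2
      have h4 := (sq_iff A (s * (Real.sqrt a * Real.sqrt b)) hA (by positivity)).mp h3
      have h5 : (s * (Real.sqrt a * Real.sqrt b))^2 = s^2 * (a*b) := by
        rw [mul_pow, mul_pow, Real.sq_sqrt ha.le, Real.sq_sqrt hb.le]
      linarith [h4, h5.ge, h5.le]
    · intro h
      have h5 : (s * (Real.sqrt a * Real.sqrt b))^2 = s^2 * (a*b) := by
        rw [mul_pow, mul_pow, Real.sq_sqrt ha.le, Real.sq_sqrt hb.le]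
      have h4 : A^2 < (s * (Real.sqrt a * Real.sqrt b))^2 := by rw [h5]; exact h
      have h3 := (sq_iff A (s * (Real.sqrt a * Real.sqrt b)) hA (by positivity)).mpr h4
      have h2 : A / (Real.sqrt a * Real.sqrt b) < s := (div_lt_iff₀ hsp).mpr h3
      have h1 : Real.arsinh (A / (Real.sqrt a * Real.sqrt b)) < r/2 := by
        rw [← Real.arsinh_sinh (r/2), ← hs']
        exact Real.arsinh_lt_arsinh.mpr h2
      linarith
  -- RHS iff
  have main2 : A < ‖x‖ * Real.tanh (r/2) * D ↔ A^2 < s^2 * (a*b) := by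
    rw [Real.tanh_eq_sinh_div_cosh, ← hs', ← hc',
      show ‖x‖ * (s/c) * D = s * (‖x‖ * D) / c by ring, lt_div_iff₀ hc]
    rw [sq_iff (A*c) (s * (‖x‖*D)) (by positivity) (by positivity)]
    constructor
    · intro h
      have : (s * (‖x‖*D))^2 = s^2 * (A^2 + a*b) := by
        rw [mul_pow, mul_pow, hD2]
      nlinarith
    · intro h
      have : (s * (‖x‖*D))^2 = s^2 * (A^2 + a*b) := by
        rw [mul_pow, mul_pow, hD2]
      nlinarith
  rw [main1, ← main2]
end

section
/- For all real numbers r, s ∈ [0,1) one has √((1−r²)(1−s²)) ≤ 1 − rs − (1/2)·(r−s)²/(1−rs) ≤ 1 − ((r+s)/2)². -/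
theorem sqrt_ineq_one (r s : ℝ) (hr : 0 ≤ r) (hr1 : r < 1) (hs : 0 ≤ s) (hs1 : s < 1) :
    Real.sqrt ((1 - r ^ 2) * (1 - s ^ 2)) ≤ 1 - r * s - (1 / 2) * (r - s) ^ 2 / (1 - r * s) ∧
      1 - r * s - (1 / 2) * (r - s) ^ 2 / (1 - r * s) ≤ 1 - ((r + s) / 2) ^ 2 := by
  have ht : 0 < 1 - r * s := by nlinarith
  constructor
  · have hy : 0 ≤ 1 - r * s - (1 / 2) * (r - s) ^ 2 / (1 - r * s) := by
      rw [sub_nonneg, div_le_iff₀ ht]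
      nlinarith [mul_pos (show (0:ℝ) < 1 - r^2 by nlinarith) (show (0:ℝ) < 1 - s^2 by nlinarith)]
    have key : (1 - r ^ 2) * (1 - s ^ 2) ≤
        (1 - r * s - (1 / 2) * (r - s) ^ 2 / (1 - r * s)) ^ 2 := by
      have h1 : ((1 / 2) * (r - s) ^ 2 / (1 - r * s)) * (1 - r * s) = (1/2) * (r-s)^2 := by
        field_simp
      have h2 : 0 ≤ ((1 / 2) * (r - s) ^ 2 / (1 - r * s))^2 := sq_nonneg _
      nlinarith [sq_nonneg (r - s)]
    calc Real.sqrt ((1 - r ^ 2) * (1 - s ^ 2))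
        ≤ Real.sqrt ((1 - r * s - (1 / 2) * (r - s) ^ 2 / (1 - r * s)) ^ 2) :=
          Real.sqrt_le_sqrt key
      _ = _ := Real.sqrt_sq hy
  · rw [sub_le_iff_le_add, ← sub_le_iff_le_add', le_div_iff₀ ht]
    nlinarith [sq_nonneg (r - s), sq_nonneg (r + s), sq_nonneg (r*s), mul_nonneg hr hs]
end

section
/- For all real numbers r, s ∈ [0,1) one has √((1−r²)(1−s²)) ≤ √(1 + r²s²) − (r² + s²)/(2√(1 + r²s²)). -/
theorem sqrt_ineq_two (r s : ℝ) (hr : 0 ≤ r) (hr1 : r < 1) (hs : 0 ≤ s) (hs1 : s < 1) :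
    Real.sqrt ((1 - r ^ 2) * (1 - s ^ 2)) ≤
      Real.sqrt (1 + r ^ 2 * s ^ 2) - (r ^ 2 + s ^ 2) / (2 * Real.sqrt (1 + r ^ 2 * s ^ 2)) := by
  set x := Real.sqrt ((1 - r ^ 2) * (1 - s ^ 2)) with hx
  set y := Real.sqrt (1 + r ^ 2 * s ^ 2) with hy
  have hr2 : r ^ 2 < 1 := by nlinarith
  have hs2 : s ^ 2 < 1 := by nlinarith
  have hXnn : 0 ≤ (1 - r ^ 2) * (1 - s ^ 2) := by nlinarith
  have hYpos : (0:ℝ) < 1 + r ^ 2 * s ^ 2 := by positivity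
  have hx2 : x ^ 2 = (1 - r ^ 2) * (1 - s ^ 2) := Real.sq_sqrt hXnn
  have hy2 : y ^ 2 = 1 + r ^ 2 * s ^ 2 := Real.sq_sqrt hYpos.le
  have hyp : 0 < y := Real.sqrt_pos.mpr hYpos
  have hxnn : 0 ≤ x := Real.sqrt_nonneg _
  have key : 2 * x * y ≤ x ^ 2 + y ^ 2 := by nlinarith [sq_nonneg (x - y)]
  have h1 : y - (r ^ 2 + s ^ 2) / (2 * y) - x = (x ^ 2 + y ^ 2 - 2 * x * y) / (2 * y) := by
    field_simp
    nlinarith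
  nlinarith [div_nonneg (by nlinarith : (0:ℝ) ≤ x ^ 2 + y ^ 2 - 2 * x * y) (by nlinarith : (0:ℝ) ≤ 2 * y)]
end

section
/- For all points x, y in the open unit ball 𝔹ⁿ one has tanh(ρ(x,y)/4) ≥ |x−y| / (1 + |x||y| + √(1−|x|²)·√(1−|y|²)) ≥ |x−y|/2. -/
private lemma tanh_half_arsinh (t : ℝ) :
    Real.tanh (Real.arsinh t / 2) = t / (1 + Real.sqrt (1 + t ^ 2)) := by
  have h2v : 2 * (Real.arsinh t / 2) = Real.arsinh t := by ring
  set v := Real.arsinh t / 2 with hv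
  have hs : Real.sinh (2 * v) = t := by rw [h2v, Real.sinh_arsinh]
  have hc : Real.cosh (2 * v) = Real.sqrt (1 + t ^ 2) := by rw [h2v, Real.cosh_arsinh]
  rw [← hc, ← hs, Real.sinh_two_mul, Real.cosh_two_mul, Real.tanh_eq_sinh_div_cosh]
  have hcv : (0:ℝ) < Real.cosh v := Real.cosh_pos v
  have hsq : Real.cosh v ^ 2 = Real.sinh v ^ 2 + 1 := Real.cosh_sq v
  have hden : 1 + (Real.cosh v ^ 2 + Real.sinh v ^ 2) = 2 * Real.cosh v ^ 2 := by linarith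
  rw [hden]
  field_simp

theorem tanh_quarter_hypDist_lower_bound {n : ℕ} (x y : EuclideanSpace ℝ (Fin n))
    (hx : ‖x‖ < 1) (hy : ‖y‖ < 1) :
    Real.tanh (hypDistBall x y / 4) ≥
      ‖x - y‖ / (1 + ‖x‖ * ‖y‖ + Real.sqrt (1 - ‖x‖ ^ 2) * Real.sqrt (1 - ‖y‖ ^ 2)) ∧
    ‖x - y‖ / (1 + ‖x‖ * ‖y‖ + Real.sqrt (1 - ‖x‖ ^ 2) * Real.sqrt (1 - ‖y‖ ^ 2)) ≥
      ‖x - y‖ / 2 := by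
  set X := ‖x‖ with hX
  set Y := ‖y‖ with hY
  set d := ‖x - y‖ with hd
  have hX0 : 0 ≤ X := norm_nonneg x
  have hY0 : 0 ≤ Y := norm_nonneg y
  have hd0 : 0 ≤ d := norm_nonneg _
  have hXs : (0:ℝ) < 1 - X ^ 2 := by nlinarith
  have hYs : (0:ℝ) < 1 - Y ^ 2 := by nlinarith
  set a := Real.sqrt (1 - X ^ 2) with ha
  set b := Real.sqrt (1 - Y ^ 2) with hb
  have ha0 : 0 < a := Real.sqrt_pos.mpr hXs
  have hb0 : 0 < b := Real.sqrt_pos.mpr hYs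
  have ha2 : a ^ 2 = 1 - X ^ 2 := Real.sq_sqrt hXs.le
  have hb2 : b ^ 2 = 1 - Y ^ 2 := Real.sq_sqrt hYs.le
  have hab : 0 < a * b := mul_pos ha0 hb0
  have hdXY : d ≤ X + Y := by
    calc d ≤ ‖x‖ + ‖y‖ := norm_sub_le x y
    _ = X + Y := rfl
  -- key: (a*b)^2 + d^2 ≤ (1 + X*Y)^2
  have hkey : (a * b) ^ 2 + d ^ 2 ≤ (1 + X * Y) ^ 2 := by
    have : d ^ 2 ≤ (X + Y) ^ 2 := by nlinarith
    nlinarith [sq_nonneg (X - Y)]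
  -- Cauchy-Schwarz: X*Y + a*b ≤ 1
  have hcs : X * Y + a * b ≤ 1 := by
    nlinarith [sq_nonneg (X * b - Y * a), sq_nonneg (X * a - Y * b), sq_nonneg (a - b),
      sq_nonneg (X - Y)]
  have hden1 : (0:ℝ) < 1 + X * Y + a * b := by positivity
  -- the tanh equality
  have heq : Real.tanh (hypDistBall x y / 4) =
      d / (a * b + Real.sqrt ((a * b) ^ 2 + d ^ 2)) := by
    have h4 : hypDistBall x y / 4 = Real.arsinh (d / (a * b)) / 2 := by
      rw [hypDistBall]; ring
    rw [h4, tanh_half_arsinh]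
    have hsqrt : Real.sqrt (1 + (d / (a * b)) ^ 2) =
        Real.sqrt ((a * b) ^ 2 + d ^ 2) / (a * b) := by
      rw [show (1 + (d / (a * b)) ^ 2) = ((a * b) ^ 2 + d ^ 2) / (a * b) ^ 2 by
        field_simp, Real.sqrt_div (by positivity), Real.sqrt_sq hab.le]
    rw [hsqrt]
    have hT : 0 < a * b + Real.sqrt ((a * b) ^ 2 + d ^ 2) := by positivity
    rw [show 1 + Real.sqrt ((a * b) ^ 2 + d ^ 2) / (a * b) =
        (a * b + Real.sqrt ((a * b) ^ 2 + d ^ 2)) / (a * b) by field_simp]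
    rw [div_div_div_cancel_right₀]
    exact hab.ne'
  rw [heq]
  have hsqrtle : Real.sqrt ((a * b) ^ 2 + d ^ 2) ≤ 1 + X * Y := by
    rw [show (1 + X * Y) = Real.sqrt ((1 + X * Y) ^ 2) by
      rw [Real.sqrt_sq (by positivity)]]
    exact Real.sqrt_le_sqrt hkey
  have hsqrtpos : 0 < Real.sqrt ((a * b) ^ 2 + d ^ 2) := by positivity
  constructor
  · rw [ge_iff_le]
    exact div_le_div_of_nonneg_left hd0 (by positivity) (by linarith)
  · rw [ge_iff_le]
    exact div_le_div_of_nonneg_left hd0 hden1 (by linarith)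
end

section
/- For all points x, y in the open unit ball 𝔹ⁿ one has tanh(ρ(x,y)/4) ≥ |x−y| / √( |x−y|² + 4·√(1−|x|²)·√(1−|y|²) ). -/
private lemma tanh_mono_aux {u v : ℝ} (h : u ≤ v) : Real.tanh u ≤ Real.tanh v := by
  rw [Real.tanh_eq_sinh_div_cosh, Real.tanh_eq_sinh_div_cosh,
    div_le_div_iff₀ (Real.cosh_pos _) (Real.cosh_pos _)]
  have h1 : Real.sinh (u - v) ≤ 0 := by
    rw [← Real.sinh_zero]
    exact Real.sinh_le_sinh.2 (by linarith)
  rw [Real.sinh_sub] at h1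
  linarith

private lemma main_aux {d P : ℝ} (hd0 : 0 ≤ d) (hPpos : 0 < P)
    (key : d ^ 2 ≤ 4 * (1 - P)) :
    d / Real.sqrt (d ^ 2 + 4 * P) ≤ Real.tanh (Real.arsinh (d / P) / 2) := by
  set s := d / (2 * Real.sqrt P) with hs
  have hsqP : 0 < Real.sqrt P := Real.sqrt_pos.2 hPpos
  have hs0 : 0 ≤ s := by positivity
  have hs2 : s ^ 2 = d ^ 2 / (4 * P) := by
    rw [hs, div_pow, mul_pow, Real.sq_sqrt hPpos.le]; ring_nf
  -- step 1 : arsinh s ≤ arsinh (d / P) / 2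
  have step1 : Real.arsinh s ≤ Real.arsinh (d / P) / 2 := by
    rw [le_div_iff₀ (by norm_num : (0:ℝ) < 2)]
    have h2s : Real.arsinh s * 2 = Real.arsinh (Real.sinh (2 * Real.arsinh s)) := by
      rw [Real.arsinh_sinh]; ring
    rw [h2s]
    apply Real.arsinh_le_arsinh.2
    rw [Real.sinh_two_mul, Real.sinh_arsinh, Real.cosh_arsinh]
    have hLnn : 0 ≤ 2 * s * Real.sqrt (1 + s ^ 2) := by positivity
    have hRnn : 0 ≤ d / P := by positivity
    have hsq : (2 * s * Real.sqrt (1 + s ^ 2)) ^ 2 ≤ (d / P) ^ 2 := by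
      have e1 : (2 * s * Real.sqrt (1 + s ^ 2)) ^ 2 = 4 * s ^ 2 * (1 + s ^ 2) := by
        rw [mul_pow, mul_pow, Real.sq_sqrt (by positivity)]; ring
      rw [e1, hs2, div_pow]
      have e2 : 4 * (d ^ 2 / (4 * P)) * (1 + d ^ 2 / (4 * P)) =
          (d ^ 2 * (4 * P + d ^ 2)) / (4 * P ^ 2) := by
        field_simp
      rw [e2, div_le_div_iff₀ (by positivity) (by positivity)]
      have h1 : 4 * P + d ^ 2 ≤ 4 := by linarith
      have h2 : d ^ 2 * (4 * P + d ^ 2) ≤ d ^ 2 * 4 :=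
        mul_le_mul_of_nonneg_left h1 (sq_nonneg d)
      nlinarith [mul_le_mul_of_nonneg_right h2 (sq_nonneg P)]
    calc 2 * s * Real.sqrt (1 + s ^ 2)
        = Real.sqrt ((2 * s * Real.sqrt (1 + s ^ 2)) ^ 2) := (Real.sqrt_sq hLnn).symm
      _ ≤ Real.sqrt ((d / P) ^ 2) := Real.sqrt_le_sqrt hsq
      _ = d / P := Real.sqrt_sq hRnn
  -- step 2 : d / √(d² + 4P) = tanh (arsinh s)
  have step2 : d / Real.sqrt (d ^ 2 + 4 * P) = Real.tanh (Real.arsinh s) := by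
    rw [Real.tanh_eq_sinh_div_cosh, Real.sinh_arsinh, Real.cosh_arsinh]
    have hden1 : 0 < Real.sqrt (d ^ 2 + 4 * P) := Real.sqrt_pos.2 (by nlinarith)
    have hden2 : 0 < Real.sqrt (1 + s ^ 2) := Real.sqrt_pos.2 (by positivity)
    rw [div_eq_div_iff hden1.ne' hden2.ne']
    have l : d * Real.sqrt (1 + s ^ 2) = Real.sqrt (d ^ 2 * (1 + s ^ 2)) := by
      rw [Real.sqrt_mul (sq_nonneg d), Real.sqrt_sq hd0]
    have r : s * Real.sqrt (d ^ 2 + 4 * P) = Real.sqrt (s ^ 2 * (d ^ 2 + 4 * P)) := by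
      rw [Real.sqrt_mul (sq_nonneg s), Real.sqrt_sq hs0]
    rw [l, r]
    congr 1
    have h4P : (4 : ℝ) * P ≠ 0 := by positivity
    apply mul_left_cancel₀ h4P
    rw [hs2]
    field_simp
    ring
  rw [step2]
  exact tanh_mono_aux step1

theorem tanh_quarter_hypDist_lower_bound_six {n : ℕ} (x y : EuclideanSpace ℝ (Fin n))
    (hx : ‖x‖ < 1) (hy : ‖y‖ < 1) :
    Real.tanh (hypDistBall x y / 4) ≥
      ‖x - y‖ / Real.sqrt (‖x - y‖ ^ 2 +
        4 * Real.sqrt (1 - ‖x‖ ^ 2) * Real.sqrt (1 - ‖y‖ ^ 2)) := by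
  have ha0 : 0 ≤ ‖x‖ := norm_nonneg x
  have hb0 : 0 ≤ ‖y‖ := norm_nonneg y
  have hd0 : 0 ≤ ‖x - y‖ := norm_nonneg _
  have hApos : 0 < Real.sqrt (1 - ‖x‖ ^ 2) := Real.sqrt_pos.2 (by nlinarith)
  have hBpos : 0 < Real.sqrt (1 - ‖y‖ ^ 2) := Real.sqrt_pos.2 (by nlinarith)
  have hPpos : 0 < Real.sqrt (1 - ‖x‖ ^ 2) * Real.sqrt (1 - ‖y‖ ^ 2) :=
    mul_pos hApos hBpos
  have key : ‖x - y‖ ^ 2 ≤ 4 * (1 - Real.sqrt (1 - ‖x‖ ^ 2) * Real.sqrt (1 - ‖y‖ ^ 2)) := by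
    have hdab : ‖x - y‖ ≤ ‖x‖ + ‖y‖ := norm_sub_le x y
    have hPeq : Real.sqrt (1 - ‖x‖ ^ 2) * Real.sqrt (1 - ‖y‖ ^ 2)
        = Real.sqrt ((1 - ‖x‖ ^ 2) * (1 - ‖y‖ ^ 2)) :=
      (Real.sqrt_mul (by nlinarith) _).symm
    have h1 : Real.sqrt ((1 - ‖x‖ ^ 2) * (1 - ‖y‖ ^ 2)) ≤ (4 - (‖x‖ + ‖y‖) ^ 2) / 4 := by
      have h2 : (1 - ‖x‖ ^ 2) * (1 - ‖y‖ ^ 2) ≤ ((4 - (‖x‖ + ‖y‖) ^ 2) / 4) ^ 2 := by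
        nlinarith [sq_nonneg (‖x‖ - ‖y‖), sq_nonneg (‖x‖ + ‖y‖), mul_nonneg ha0 hb0]
      calc Real.sqrt ((1 - ‖x‖ ^ 2) * (1 - ‖y‖ ^ 2))
          ≤ Real.sqrt (((4 - (‖x‖ + ‖y‖) ^ 2) / 4) ^ 2) := Real.sqrt_le_sqrt h2
        _ = (4 - (‖x‖ + ‖y‖) ^ 2) / 4 := Real.sqrt_sq (by nlinarith)
    have hd2 : ‖x - y‖ ^ 2 ≤ (‖x‖ + ‖y‖) ^ 2 := by nlinarith
    rw [hPeq]; nlinarith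
  have h := main_aux hd0 hPpos key
  have hrw : hypDistBall x y / 4
      = Real.arsinh (‖x - y‖ / (Real.sqrt (1 - ‖x‖ ^ 2) * Real.sqrt (1 - ‖y‖ ^ 2))) / 2 := by
    rw [hypDistBall]; ring
  have hrw2 : ‖x - y‖ ^ 2 + 4 * Real.sqrt (1 - ‖x‖ ^ 2) * Real.sqrt (1 - ‖y‖ ^ 2)
      = ‖x - y‖ ^ 2 + 4 * (Real.sqrt (1 - ‖x‖ ^ 2) * Real.sqrt (1 - ‖y‖ ^ 2)) := by ring
  rw [ge_iff_le, hrw, hrw2]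
  exact h
end
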